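/- Let Q ∈ ℝ^{m×m} be symmetric positive definite, q ∈ ℝ^m, G ∈ ℝ^{n×m}, b ∈ ℝ^n, and ρ ∈ ℝ^n with ρ_i > 0 for all i. Set M = G Q⁻¹ Gᵀ and r = G Q⁻¹ q + b. Then y* ∈ ℝ^m is a global minimizer of the vector ℓ1-penalty objective φ_ρ(y) = ½yᵀQy + qᵀy + Σ_{i=1}^n ρ_i max(0, (Gy − b)_i) if and only if there exists a global minimizer ẑ* of the box-constrained QP min_{ẑ∈ℝ^n} ½ẑᵀMẑ + rᵀẑ subject to 0 ≤ ẑ ≤ ρ (componentwise) such that y* = −Q⁻¹(q + Gᵀẑ*). -/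

import Mathlib

open Matrix Finset

private lemma sym_dot {k : ℕ} {A : Matrix (Fin k) (Fin k) ℝ} (hA : Aᵀ = A)
    (x y : Fin k → ℝ) : x ⬝ᵥ A *ᵥ y = y ⬝ᵥ A *ᵥ x := by
  rw [dotProduct_mulVec, ← mulVec_transpose, hA, dotProduct_comm]

private lemma dot_trans {k l : ℕ} (G : Matrix (Fin k) (Fin l) ℝ)
    (z : Fin k → ℝ) (v : Fin l → ℝ) : z ⬝ᵥ G *ᵥ v = (Gᵀ *ᵥ z) ⬝ᵥ v := by
  rw [dotProduct_mulVec, ← mulVec_transpose]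

/-- The key algebraic identity relating the ℓ1-penalty objective to the dual QP. -/
private lemma key_id {m n : ℕ} (Q Qi : Matrix (Fin m) (Fin m) ℝ)
    (hQQi : ∀ v, Q *ᵥ (Qi *ᵥ v) = v) (hQs : Qᵀ = Q) (hQis : Qiᵀ = Qi)
    (q : Fin m → ℝ) (G : Matrix (Fin n) (Fin m) ℝ) (b ρ : Fin n → ℝ)
    (z : Fin n → ℝ) (y : Fin m → ℝ) :
    (1/2) * (y ⬝ᵥ Q *ᵥ y) + q ⬝ᵥ y + ∑ i, ρ i * max 0 ((G *ᵥ y) i - b i)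
    = (1/2) * ((y + Qi *ᵥ (q + Gᵀ *ᵥ z)) ⬝ᵥ Q *ᵥ (y + Qi *ᵥ (q + Gᵀ *ᵥ z)))
      - ((1/2) * (z ⬝ᵥ (G * Qi * Gᵀ) *ᵥ z) + (G *ᵥ (Qi *ᵥ q) + b) ⬝ᵥ z)
      - (1/2) * (q ⬝ᵥ Qi *ᵥ q)
      + ∑ i, (ρ i * max 0 ((G *ᵥ y) i - b i) - z i * ((G *ᵥ y) i - b i)) := by
  have hsum : ∑ i, (ρ i * max 0 ((G *ᵥ y) i - b i) - z i * ((G *ᵥ y) i - b i))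
      = (∑ i, ρ i * max 0 ((G *ᵥ y) i - b i)) - (z ⬝ᵥ (G *ᵥ y) - z ⬝ᵥ b) := by
    simp [dotProduct, Finset.sum_sub_distrib, mul_sub]
  set u : Fin m → ℝ := q + Gᵀ *ᵥ z with hu
  set w : Fin m → ℝ := Qi *ᵥ u with hw
  have hQw : Q *ᵥ w = u := hQQi u
  have hquad : (y + w) ⬝ᵥ Q *ᵥ (y + w)
      = y ⬝ᵥ Q *ᵥ y + 2 * (y ⬝ᵥ u) + u ⬝ᵥ w := by
    rw [mulVec_add, hQw, dotProduct_add, add_dotProduct, add_dotProduct]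
    rw [sym_dot hQs w y, hQw, dotProduct_comm w u]
    ring
  have hyu : y ⬝ᵥ u = q ⬝ᵥ y + y ⬝ᵥ Gᵀ *ᵥ z := by
    rw [hu, dotProduct_add, dotProduct_comm y q]
  have huw : u ⬝ᵥ w = q ⬝ᵥ Qi *ᵥ q + 2 * (q ⬝ᵥ Qi *ᵥ (Gᵀ *ᵥ z))
      + (Gᵀ *ᵥ z) ⬝ᵥ Qi *ᵥ (Gᵀ *ᵥ z) := by
    rw [hw, hu, mulVec_add, dotProduct_add, add_dotProduct, add_dotProduct]
    rw [sym_dot hQis (Gᵀ *ᵥ z) q]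
    ring
  have hMz : z ⬝ᵥ (G * Qi * Gᵀ) *ᵥ z = (Gᵀ *ᵥ z) ⬝ᵥ Qi *ᵥ (Gᵀ *ᵥ z) := by
    rw [← mulVec_mulVec, ← mulVec_mulVec, dot_trans, dot_trans]
  have hrz : (G *ᵥ (Qi *ᵥ q) + b) ⬝ᵥ z = q ⬝ᵥ Qi *ᵥ (Gᵀ *ᵥ z) + b ⬝ᵥ z := by
    rw [add_dotProduct, dotProduct_comm (G *ᵥ (Qi *ᵥ q)) z, dot_trans,
      sym_dot hQis (Gᵀ *ᵥ z) q]
  have hzGy : z ⬝ᵥ (G *ᵥ y) = y ⬝ᵥ Gᵀ *ᵥ z := by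
    rw [dot_trans, dotProduct_comm, dotProduct_mulVec, ← mulVec_transpose, transpose_transpose]
  have hbz : b ⬝ᵥ z = z ⬝ᵥ b := dotProduct_comm b z
  rw [hsum, hquad, hyu, huw, hMz, hrz, hzGy, hbz]
  ring

private lemma psi_perturb {n : ℕ} (M : Matrix (Fin n) (Fin n) ℝ) (hMs : Mᵀ = M)
    (r z : Fin n → ℝ) (i : Fin n) (t : ℝ) :
    (1/2) * ((z + Pi.single i t) ⬝ᵥ M *ᵥ (z + Pi.single i t)) + r ⬝ᵥ (z + Pi.single i t)
    = (1/2) * (z ⬝ᵥ M *ᵥ z) + r ⬝ᵥ z + t * ((M *ᵥ z) i + r i) + t^2/2 * M i i := by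
  have h1 : z ⬝ᵥ M *ᵥ Pi.single i t = t * (M *ᵥ z) i := by
    rw [sym_dot hMs, single_dotProduct]
  have h2 : (Pi.single i t : Fin n → ℝ) ⬝ᵥ M *ᵥ z = t * (M *ᵥ z) i := single_dotProduct _ _ _
  have h3 : (Pi.single i t : Fin n → ℝ) ⬝ᵥ M *ᵥ Pi.single i t = t * (M i i * t) := by
    rw [single_dotProduct, mulVec_single]
    simp
  rw [mulVec_add, dotProduct_add, add_dotProduct, add_dotProduct, dotProduct_add,
    h1, h2, h3, dotProduct_single]
  ring

private lemma box_min_grad {n : ℕ} (M : Matrix (Fin n) (Fin n) ℝ) (hMs : Mᵀ = M)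
    (hMii : ∀ i, 0 ≤ M i i) (r ρ zhat : Fin n → ℝ)
    (hfeas : ∀ i, 0 ≤ zhat i ∧ zhat i ≤ ρ i)
    (hmin : ∀ z : Fin n → ℝ, (∀ i, 0 ≤ z i ∧ z i ≤ ρ i) →
      (1/2) * (zhat ⬝ᵥ M *ᵥ zhat) + r ⬝ᵥ zhat ≤ (1/2) * (z ⬝ᵥ M *ᵥ z) + r ⬝ᵥ z)
    (i : Fin n) :
    (0 < (M *ᵥ zhat) i + r i → zhat i = 0) ∧
    ((M *ᵥ zhat) i + r i < 0 → zhat i = ρ i) := by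
  set g := (M *ᵥ zhat) i + r i with hg
  have key : ∀ t : ℝ, 0 ≤ zhat i + t → zhat i + t ≤ ρ i →
      0 ≤ t * g + t^2/2 * M i i := by
    intro t h1 h2
    have hf : ∀ j, 0 ≤ (zhat + (Pi.single i t : Fin n → ℝ)) j ∧ (zhat + (Pi.single i t : Fin n → ℝ)) j ≤ ρ j := by
      intro j
      by_cases hj : j = i
      · subst hj; simpa using ⟨h1, h2⟩
      · simpa [Pi.single_eq_of_ne hj] using hfeas j
    have := hmin _ hf
    rw [psi_perturb M hMs r zhat i t] at this
    linarith
  have hMipos : (0:ℝ) < M i i + 1 := by linarith [hMii i]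
  constructor
  · intro hgpos
    by_contra h0
    have hzi : 0 < zhat i := lt_of_le_of_ne (hfeas i).1 (Ne.symm h0)
    set t0 := min (zhat i) (g / (M i i + 1)) with ht0
    have ht0pos : 0 < t0 := lt_min hzi (div_pos hgpos hMipos)
    have ht0z : t0 ≤ zhat i := min_le_left _ _
    have ht0g : t0 * (M i i + 1) ≤ g := by
      have := min_le_right (zhat i) (g / (M i i + 1))
      rwa [le_div_iff₀ hMipos] at this
    have := key (-t0) (by linarith) (by linarith [(hfeas i).2])
    nlinarith [mul_pos ht0pos hgpos, sq_nonneg t0,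
      mul_le_mul_of_nonneg_left ht0g ht0pos.le]
  · intro hgneg
    by_contra h0
    have hzi : zhat i < ρ i := lt_of_le_of_ne (hfeas i).2 h0
    set t0 := min (ρ i - zhat i) (-g / (M i i + 1)) with ht0
    have ht0pos : 0 < t0 := lt_min (by linarith) (div_pos (by linarith) hMipos)
    have ht0z : t0 ≤ ρ i - zhat i := min_le_left _ _
    have ht0g : t0 * (M i i + 1) ≤ -g := by
      have := min_le_right (ρ i - zhat i) (-g / (M i i + 1))
      rwa [le_div_iff₀ hMipos] at this
    have := key t0 (by linarith [(hfeas i).1]) (by linarith)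
    nlinarith [mul_pos ht0pos (neg_pos.mpr hgneg), sq_nonneg t0,
      mul_le_mul_of_nonneg_left ht0g ht0pos.le]

theorem l1_penalty_iff_boxQP {m n : ℕ}
    (Q : Matrix (Fin m) (Fin m) ℝ) (hQ : Q.PosDef)
    (q : Fin m → ℝ) (G : Matrix (Fin n) (Fin m) ℝ) (b : Fin n → ℝ)
    (ρ : Fin n → ℝ) (hρ : ∀ i, 0 < ρ i)
    (M : Matrix (Fin n) (Fin n) ℝ) (hM : M = G * Q⁻¹ * Gᵀ)
    (r : Fin n → ℝ) (hr : r = G.mulVec (Q⁻¹.mulVec q) + b)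
    (φρ : (Fin m → ℝ) → ℝ)
    (hφρ : φρ = fun y => (1/2) * (y ⬝ᵥ Q.mulVec y) + q ⬝ᵥ y
        + ∑ i, ρ i * max 0 (G.mulVec y i - b i))
    (ystar : Fin m → ℝ) :
    (∀ y, φρ ystar ≤ φρ y) ↔
    ∃ zhat : Fin n → ℝ,
      (∀ i, 0 ≤ zhat i ∧ zhat i ≤ ρ i) ∧
      (∀ z : Fin n → ℝ, (∀ i, 0 ≤ z i ∧ z i ≤ ρ i) →
        (1/2) * (zhat ⬝ᵥ M.mulVec zhat) + r ⬝ᵥ zhat ≤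
          (1/2) * (z ⬝ᵥ M.mulVec z) + r ⬝ᵥ z) ∧
      ystar = -(Q⁻¹.mulVec (q + Gᵀ.mulVec zhat)) := by
  -- Basic facts about Q and Q⁻¹
  have hQs : Qᵀ = Q := by
    have := hQ.1
    rwa [Matrix.IsHermitian, conjTranspose_eq_transpose_of_trivial] at this
  have hQiPD : Q⁻¹.PosDef := hQ.inv
  have hQis : Q⁻¹ᵀ = Q⁻¹ := by
    have := hQiPD.1
    rwa [Matrix.IsHermitian, conjTranspose_eq_transpose_of_trivial] at this
  have hdet : IsUnit Q.det := hQ.det_pos.ne'.isUnit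
  have hQQi : ∀ v, Q *ᵥ (Q⁻¹ *ᵥ v) = v := by
    intro v
    rw [mulVec_mulVec, Matrix.mul_nonsing_inv _ hdet, one_mulVec]
  have hQnn : ∀ x : Fin m → ℝ, 0 ≤ x ⬝ᵥ Q *ᵥ x := by
    intro x
    simpa using hQ.posSemidef.dotProduct_mulVec_nonneg x
  have hQposd : ∀ x : Fin m → ℝ, x ⬝ᵥ Q *ᵥ x ≤ 0 → x = 0 := by
    intro x hx
    by_contra h0
    have := hQ.dotProduct_mulVec_pos h0
    simp only [star_trivial] at this
    linarith
  have hMs : Mᵀ = M := by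
    rw [hM, transpose_mul, transpose_mul, transpose_transpose, hQis, Matrix.mul_assoc]
  have hMnn : ∀ z : Fin n → ℝ, 0 ≤ z ⬝ᵥ M *ᵥ z := by
    intro z
    rw [hM, ← mulVec_mulVec, ← mulVec_mulVec, dot_trans G]
    simpa using hQiPD.posSemidef.dotProduct_mulVec_nonneg (Gᵀ *ᵥ z)
  have hMii : ∀ i, 0 ≤ M i i := by
    intro i
    have := hMnn (Pi.single i 1)
    simpa [single_dotProduct, mulVec_single] using this
  have hφ : ∀ y, φρ y = (1/2) * (y ⬝ᵥ Q *ᵥ y) + q ⬝ᵥ y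
      + ∑ i, ρ i * max 0 ((G *ᵥ y) i - b i) := fun y => by rw [hφρ]
  -- the key identity specialized
  have hkey : ∀ (z : Fin n → ℝ) (y : Fin m → ℝ),
      φρ y = (1/2) * ((y + Q⁻¹ *ᵥ (q + Gᵀ *ᵥ z)) ⬝ᵥ Q *ᵥ (y + Q⁻¹ *ᵥ (q + Gᵀ *ᵥ z)))
      - ((1/2) * (z ⬝ᵥ M *ᵥ z) + r ⬝ᵥ z) - (1/2) * (q ⬝ᵥ Q⁻¹ *ᵥ q)
      + ∑ i, (ρ i * max 0 ((G *ᵥ y) i - b i) - z i * ((G *ᵥ y) i - b i)) := by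
    intro z y
    rw [hφ y, hM, hr]
    exact key_id Q Q⁻¹ hQQi hQs hQis q G b ρ z y
  -- value of φρ at the image of a box minimizer
  have hvalgen : ∀ zhat : Fin n → ℝ, (∀ i, 0 ≤ zhat i ∧ zhat i ≤ ρ i) →
      (∀ z : Fin n → ℝ, (∀ i, 0 ≤ z i ∧ z i ≤ ρ i) →
        (1/2) * (zhat ⬝ᵥ M *ᵥ zhat) + r ⬝ᵥ zhat ≤ (1/2) * (z ⬝ᵥ M *ᵥ z) + r ⬝ᵥ z) →
      φρ (-(Q⁻¹ *ᵥ (q + Gᵀ *ᵥ zhat)))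
        = -((1/2) * (zhat ⬝ᵥ M *ᵥ zhat) + r ⬝ᵥ zhat) - (1/2) * (q ⬝ᵥ Q⁻¹ *ᵥ q) := by
    intro zhat hfeas hmin
    set ys : Fin m → ℝ := -(Q⁻¹ *ᵥ (q + Gᵀ *ᵥ zhat)) with hys
    -- the slack at ys equals minus the gradient of the QP
    have hGys : ∀ i, (G *ᵥ ys) i - b i = -((M *ᵥ zhat) i + r i) := by
      intro i
      have hv : G *ᵥ ys = -(M *ᵥ zhat) - G *ᵥ (Q⁻¹ *ᵥ q) := by
        rw [hys, hM]
        simp only [mulVec_neg, mulVec_add, ← mulVec_mulVec]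
        abel
      rw [hv, hr]
      simp [Pi.sub_apply, Pi.neg_apply, Pi.add_apply]
      ring
    -- complementarity
    have hcomp : ∀ i, ρ i * max 0 ((G *ᵥ ys) i - b i) - zhat i * ((G *ᵥ ys) i - b i) = 0 := by
      intro i
      obtain ⟨h1, h2⟩ := box_min_grad M hMs hMii r ρ zhat hfeas hmin i
      rw [hGys i]
      rcases lt_trichotomy ((M *ᵥ zhat) i + r i) 0 with hlt | heq | hgt
      · rw [h2 hlt, max_eq_right (by linarith)]
        ring
      · rw [heq]; simp
      · rw [h1 hgt, max_eq_left (by linarith)]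
        ring
    rw [hkey zhat ys]
    have hzero : ys + Q⁻¹ *ᵥ (q + Gᵀ *ᵥ zhat) = 0 := by
      rw [hys]; abel
    rw [hzero]
    simp [hcomp]
  -- a general lower bound on φρ in terms of the QP objective
  have hlbgen : ∀ zhat : Fin n → ℝ, (∀ i, 0 ≤ zhat i ∧ zhat i ≤ ρ i) → ∀ y,
      (1/2) * ((y + Q⁻¹ *ᵥ (q + Gᵀ *ᵥ zhat)) ⬝ᵥ Q *ᵥ (y + Q⁻¹ *ᵥ (q + Gᵀ *ᵥ zhat)))
        + (-((1/2) * (zhat ⬝ᵥ M *ᵥ zhat) + r ⬝ᵥ zhat) - (1/2) * (q ⬝ᵥ Q⁻¹ *ᵥ q))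
        ≤ φρ y := by
    intro zhat hfeas y
    rw [hkey zhat y]
    have hq2 : 0 ≤ ∑ i, (ρ i * max 0 ((G *ᵥ y) i - b i) - zhat i * ((G *ᵥ y) i - b i)) := by
      apply Finset.sum_nonneg
      intro i _
      rcases le_or_gt 0 ((G *ᵥ y) i - b i) with hs | hs
      · rw [max_eq_right hs]
        nlinarith [(hfeas i).1, (hfeas i).2]
      · rw [max_eq_left hs.le]
        nlinarith [(hfeas i).1]
    linarith
  -- sufficiency: the image of a box minimizer is a global minimizer of φρ
  have suff : ∀ zhat : Fin n → ℝ, (∀ i, 0 ≤ zhat i ∧ zhat i ≤ ρ i) →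
      (∀ z : Fin n → ℝ, (∀ i, 0 ≤ z i ∧ z i ≤ ρ i) →
        (1/2) * (zhat ⬝ᵥ M *ᵥ zhat) + r ⬝ᵥ zhat ≤ (1/2) * (z ⬝ᵥ M *ᵥ z) + r ⬝ᵥ z) →
      ∀ y, φρ (-(Q⁻¹ *ᵥ (q + Gᵀ *ᵥ zhat))) ≤ φρ y := by
    intro zhat hfeas hmin y
    rw [hvalgen zhat hfeas hmin]
    have h1 := hlbgen zhat hfeas y
    have h2 := hQnn (y + Q⁻¹ *ᵥ (q + Gᵀ *ᵥ zhat))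
    linarith
  constructor
  · -- necessity
    intro hystar
    -- existence of a box minimizer
    have hcompact : IsCompact (Set.Icc (0 : Fin n → ℝ) ρ) := isCompact_Icc
    have hne : (Set.Icc (0 : Fin n → ℝ) ρ).Nonempty :=
      ⟨0, Set.mem_Icc.mpr ⟨le_refl _, fun i => (hρ i).le⟩⟩
    have hcont : Continuous (fun z : Fin n → ℝ => (1/2) * (z ⬝ᵥ M *ᵥ z) + r ⬝ᵥ z) := by
      simp only [dotProduct, mulVec]
      fun_prop
    obtain ⟨zhat, hzmem, hzmin⟩ := hcompact.exists_isMinOn hne hcont.continuousOn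
    have hfeas : ∀ i, 0 ≤ zhat i ∧ zhat i ≤ ρ i := by
      rw [Set.mem_Icc] at hzmem
      exact fun i => ⟨hzmem.1 i, hzmem.2 i⟩
    have hmin : ∀ z : Fin n → ℝ, (∀ i, 0 ≤ z i ∧ z i ≤ ρ i) →
        (1/2) * (zhat ⬝ᵥ M *ᵥ zhat) + r ⬝ᵥ zhat ≤ (1/2) * (z ⬝ᵥ M *ᵥ z) + r ⬝ᵥ z := by
      intro z hz
      exact hzmin (Set.mem_Icc.mpr ⟨fun i => (hz i).1, fun i => (hz i).2⟩)
    refine ⟨zhat, hfeas, hmin, ?_⟩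
    -- uniqueness of the minimizer of φρ
    set ys : Fin m → ℝ := -(Q⁻¹ *ᵥ (q + Gᵀ *ᵥ zhat)) with hys
    have h1 : φρ ystar ≤ φρ ys := hystar ys
    have hval := hvalgen zhat hfeas hmin
    have h2 := hlbgen zhat hfeas ystar
    rw [← hys] at hval
    rw [hval] at h1
    have hquad : (ystar + Q⁻¹ *ᵥ (q + Gᵀ *ᵥ zhat)) ⬝ᵥ
        Q *ᵥ (ystar + Q⁻¹ *ᵥ (q + Gᵀ *ᵥ zhat)) ≤ 0 := by linarith
    have hzero : ystar + Q⁻¹ *ᵥ (q + Gᵀ *ᵥ zhat) = 0 := hQposd _ hquad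
    have : ystar = -(Q⁻¹ *ᵥ (q + Gᵀ *ᵥ zhat)) := by
      have := congrArg (fun v => v - Q⁻¹ *ᵥ (q + Gᵀ *ᵥ zhat)) hzero
      simpa [sub_eq_iff_eq_add] using this
    exact this
  · -- sufficiency
    rintro ⟨zhat, hfeas, hmin, hy⟩
    intro y
    rw [hy]
    exact suff zhat hfeas hmin y
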